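/- Suppose x_1, y_1, x_2, y_2, ..., x_m, y_m are points in a metric space appearing in this order along a non-backtracking sequence (satisfying the reverse triangle inequality with constant B between any three points in order), and for each i, d(x_i, y_i) ≥ (s_i − t_i)/P − P where s_i − t_i ≥ L and L/(2P) ≥ P + 2B. Then d(x_1, y_m) ≥ (1/(2P))·Σ_i (s_i − t_i). -/

import Mathlib

/-- Lemma 4.5 (long thick intervals give progress): if the points
`x 0, y 0, x 1, y 1, …, x (m-1), y (m-1)` appear in order along a non-backtracking
sequence (reverse triangle inequality with constant `B`), each `dist (x i) (y i)` is at
least `(s i - t i)/P - P` with `s i - t i ≥ L` and `L/(2P) ≥ P + 2B`, then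
`dist (x 0) (y (m-1)) ≥ (1/(2P)) * Σ (s i - t i)`. -/
theorem long_thick_intervals_progress
    {X : Type*} [MetricSpace X] (m : ℕ) (hm : 1 ≤ m)
    (B P L : ℝ) (hB : 0 < B) (hP : 0 < P) (hL : 0 < L)
    (hLP : P + 2 * B ≤ L / (2 * P))
    (x y : ℕ → X) (z : ℕ → X)
    (hze : ∀ i, z (2 * i) = x i) (hzo : ∀ i, z (2 * i + 1) = y i)
    (hrev : ∀ i j k : ℕ, i ≤ j → j ≤ k → k ≤ 2 * m - 1 →
      dist (z i) (z j) + dist (z j) (z k) - B ≤ dist (z i) (z k))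
    (t s : ℕ → ℝ)
    (hts : ∀ i < m, L ≤ s i - t i)
    (hxy : ∀ i < m, (s i - t i) / P - P ≤ dist (x i) (y i)) :
    (1 / (2 * P)) * ∑ i ∈ Finset.range m, (s i - t i)
      ≤ dist (x 0) (y (m - 1)) := by
  have h2P : (0:ℝ) < 2 * P := by linarith
  induction m, hm using Nat.le_induction with
  | base =>
      simp only [Finset.sum_range_one]
      have h1 := hxy 0 (by norm_num)
      have h2 := hts 0 (by norm_num)
      have hLs : L / (2 * P) ≤ (s 0 - t 0) / (2 * P) := by gcongr
      have key : (s 0 - t 0) / P - (s 0 - t 0) / (2 * P) = (s 0 - t 0) / (2 * P) := by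
        field_simp; ring
      have e : 1 / (2 * P) * (s 0 - t 0) = (s 0 - t 0) / (2 * P) := by ring
      rw [e]
      linarith
  | succ m hm ih =>
      have ih' := ih
        (fun i j k hij hjk hk => hrev i j k hij hjk (by omega))
        (fun i hi => hts i (by omega)) (fun i hi => hxy i (by omega))
      rw [Finset.sum_range_succ]
      have e1 : 2 * (m - 1) + 1 = 2 * m - 1 := by omega
      have hA : dist (z 0) (z (2*m-1)) + dist (z (2*m-1)) (z (2*m+1)) - B
          ≤ dist (z 0) (z (2*m+1)) := hrev 0 (2*m-1) (2*m+1) (by omega) (by omega) (by omega)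
      have hB' : dist (z (2*m-1)) (z (2*m)) + dist (z (2*m)) (z (2*m+1)) - B
          ≤ dist (z (2*m-1)) (z (2*m+1)) :=
        hrev (2*m-1) (2*m) (2*m+1) (by omega) (by omega) (by omega)
      have ez0 : z 0 = x 0 := by have := hze 0; simpa using this
      have ezA : z (2*m-1) = y (m-1) := by rw [← e1]; exact hzo (m-1)
      have ezB : z (2*m) = x m := hze m
      have ezC : z (2*m+1) = y m := hzo m
      have hxm := hxy m (by omega)
      have htm := hts m (by omega)
      have hLs : L / (2 * P) ≤ (s m - t m) / (2 * P) := by gcongr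
      have key : (s m - t m) / P - (s m - t m) / (2 * P) = (s m - t m) / (2 * P) := by
        field_simp; ring
      have hd : (0:ℝ) ≤ dist (z (2*m-1)) (z (2*m)) := dist_nonneg
      rw [ezA, ezC, ez0] at hA
      rw [ezA, ezB, ezC] at hB'
      rw [ezA, ezB] at hd
      have hsplit : (1 / (2*P)) * (∑ i ∈ Finset.range m, (s i - t i) + (s m - t m))
          = (1 / (2*P)) * ∑ i ∈ Finset.range m, (s i - t i) + (s m - t m) / (2*P) := by
        ring
      have hgoal : m + 1 - 1 = m := by omega
      rw [hgoal, hsplit]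
      calc (1 / (2*P)) * ∑ i ∈ Finset.range m, (s i - t i) + (s m - t m) / (2*P)
          ≤ dist (x 0) (y (m-1)) + ((s m - t m) / P - P - 2*B) := by linarith
        _ ≤ dist (x 0) (y m) := by linarith
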